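/- (Conservation law for T, general f.) Let f : ℝ → ℝ be continuous and F : ℝ → ℝ differentiable with F′ = f. Let u be a C² solution of Δ_{H¹}u + f(u) = 0 on an open set Ω ⊆ ℝ³. Define on Ω: τ₁ = −2y·u_t² − u_x·u_t, τ₂ = 2x·u_t² − u_y·u_t, τ₃ = ½u_x² + ½u_y² − 2(x²+y²)u_t² − F(u). Then ∂τ₁/∂x + ∂τ₂/∂y + ∂τ₃/∂t = 0 at every point of Ω. -/

import Mathlib

/-- Partial derivative with respect to the first coordinate (x). -/
noncomputable def pdx (u : ℝ × ℝ × ℝ → ℝ) : ℝ × ℝ × ℝ → ℝ :=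
  fun p => fderiv ℝ u p (1, 0, 0)

/-- Partial derivative with respect to the second coordinate (y). -/
noncomputable def pdy (u : ℝ × ℝ × ℝ → ℝ) : ℝ × ℝ × ℝ → ℝ :=
  fun p => fderiv ℝ u p (0, 1, 0)

/-- Partial derivative with respect to the third coordinate (t). -/
noncomputable def pdt (u : ℝ × ℝ × ℝ → ℝ) : ℝ × ℝ × ℝ → ℝ :=
  fun p => fderiv ℝ u p (0, 0, 1)

/-- The Kohn–Laplace operator on the Heisenberg group H¹:
`Δ u = u_xx + u_yy + 4(x²+y²) u_tt + 4y u_xt − 4x u_yt`. -/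
noncomputable def KohnLaplace (u : ℝ × ℝ × ℝ → ℝ) : ℝ × ℝ × ℝ → ℝ :=
  fun p => pdx (pdx u) p + pdy (pdy u) p
    + 4 * (p.1 ^ 2 + p.2.1 ^ 2) * pdt (pdt u) p
    + 4 * p.2.1 * pdt (pdx u) p - 4 * p.1 * pdt (pdy u) p

set_option maxHeartbeats 1000000 in
/-- conservation law for the Noether symmetry T, general f:
for a C² solution of Δ_{H¹}u + f(u) = 0 on an open set Ω,
Div(τ) = 0 with τ₁ = −2y u_t² − u_x u_t, τ₂ = 2x u_t² − u_y u_t,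
τ₃ = ½u_x² + ½u_y² − 2(x²+y²)u_t² − F(u). -/
theorem conservation_law_T
    (f F : ℝ → ℝ) (hf : Continuous f) (hF : ∀ s, HasDerivAt F (f s) s)
    (Ω : Set (ℝ × ℝ × ℝ)) (hΩ : IsOpen Ω)
    (u : ℝ × ℝ × ℝ → ℝ) (hu : ContDiffOn ℝ 2 u Ω)
    (hsol : ∀ p ∈ Ω, KohnLaplace u p + f (u p) = 0) :
    ∀ p ∈ Ω,
      pdx (fun q => -2 * q.2.1 * (pdt u q) ^ 2 - pdx u q * pdt u q) p
      + pdy (fun q => 2 * q.1 * (pdt u q) ^ 2 - pdy u q * pdt u q) p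
      + pdt (fun q => (1 / 2) * (pdx u q) ^ 2 + (1 / 2) * (pdy u q) ^ 2
          - 2 * (q.1 ^ 2 + q.2.1 ^ 2) * (pdt u q) ^ 2 - F (u q)) p = 0 := by
  intro p hp
  have hmem : Ω ∈ nhds p := hΩ.mem_nhds hp
  -- differentiability of u on Ω
  have hdiffu : ∀ q ∈ Ω, HasFDerivAt u (fderiv ℝ u q) q := fun q hq =>
    ((hu.differentiableOn two_ne_zero).differentiableAt (hΩ.mem_nhds hq)).hasFDerivAt
  -- the gradient is C¹ on Ω
  have hu1 : ContDiffOn ℝ 1 (fderiv ℝ u) Ω := hu.fderiv_of_isOpen hΩ (by norm_num)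
  have hdφ : DifferentiableAt ℝ (fderiv ℝ u) p :=
    ((hu1.differentiableOn one_ne_zero).differentiableAt hmem)
  set H := fderiv ℝ (fderiv ℝ u) p with hH
  have hφ : HasFDerivAt (fderiv ℝ u) H p := hdφ.hasFDerivAt
  have hev : ∀ᶠ q in nhds p, HasFDerivAt u (fderiv ℝ u q) q :=
    Filter.eventually_of_mem hmem hdiffu
  have hsymm : ∀ v w, H v w = H w v := second_derivative_symmetric_of_eventually hev hφ
  -- derivative of the partial derivatives
  have hP : ∀ v : ℝ × ℝ × ℝ, HasFDerivAt (fun q => fderiv ℝ u q v)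
      ((ContinuousLinearMap.apply ℝ ℝ v).comp H) p := fun v =>
    (ContinuousLinearMap.apply ℝ ℝ v).hasFDerivAt.comp p hφ
  have hup : HasFDerivAt u (fderiv ℝ u p) p := hdiffu p hp
  have hFu : HasFDerivAt (fun q => F (u q)) (f (u p) • fderiv ℝ u p) p :=
    (hF (u p)).comp_hasFDerivAt p hup
  have hX : HasFDerivAt (fun q : ℝ × ℝ × ℝ => q.1)
      (ContinuousLinearMap.fst ℝ ℝ (ℝ × ℝ)) p :=
    (ContinuousLinearMap.fst ℝ ℝ (ℝ × ℝ)).hasFDerivAt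
  have hY : HasFDerivAt (fun q : ℝ × ℝ × ℝ => q.2.1)
      ((ContinuousLinearMap.fst ℝ ℝ ℝ).comp (ContinuousLinearMap.snd ℝ ℝ (ℝ × ℝ))) p :=
    ((ContinuousLinearMap.fst ℝ ℝ ℝ).comp (ContinuousLinearMap.snd ℝ ℝ (ℝ × ℝ))).hasFDerivAt
  -- squares of partials
  have hsq : ∀ v : ℝ × ℝ × ℝ, HasFDerivAt (fun q => (fderiv ℝ u q v) ^ 2)
      ((fderiv ℝ u p v) • ((ContinuousLinearMap.apply ℝ ℝ v).comp H)
        + (fderiv ℝ u p v) • ((ContinuousLinearMap.apply ℝ ℝ v).comp H)) p := by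
    intro v
    have := (hP v).fun_mul (hP v)
    simpa [pow_two] using this
  -- τ₁
  have hg1 : HasFDerivAt (fun q => -2 * q.2.1 * (pdt u q) ^ 2 - pdx u q * pdt u q)
      (((-2 * p.2.1) • ((fderiv ℝ u p (0, 0, 1)) •
            ((ContinuousLinearMap.apply ℝ ℝ ((0 : ℝ), (0 : ℝ), (1 : ℝ))).comp H)
          + (fderiv ℝ u p (0, 0, 1)) •
            ((ContinuousLinearMap.apply ℝ ℝ ((0 : ℝ), (0 : ℝ), (1 : ℝ))).comp H))
        + ((fderiv ℝ u p (0, 0, 1)) ^ 2) • ((-2 : ℝ) • ((ContinuousLinearMap.fst ℝ ℝ ℝ).comp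
            (ContinuousLinearMap.snd ℝ ℝ (ℝ × ℝ)))))
       - ((fderiv ℝ u p (1, 0, 0)) •
            ((ContinuousLinearMap.apply ℝ ℝ ((0 : ℝ), (0 : ℝ), (1 : ℝ))).comp H)
          + (fderiv ℝ u p (0, 0, 1)) •
            ((ContinuousLinearMap.apply ℝ ℝ ((1 : ℝ), (0 : ℝ), (0 : ℝ))).comp H))) p := by
    have hA : HasFDerivAt (fun q : ℝ × ℝ × ℝ => -2 * q.2.1)
        ((-2 : ℝ) • ((ContinuousLinearMap.fst ℝ ℝ ℝ).comp
            (ContinuousLinearMap.snd ℝ ℝ (ℝ × ℝ)))) p := hY.const_mul (-2 : ℝ)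
    have := (hA.fun_mul (hsq (0, 0, 1))).fun_sub ((hP (1, 0, 0)).fun_mul (hP (0, 0, 1)))
    simpa [pdx, pdt] using this
  -- τ₂
  have hg2 : HasFDerivAt (fun q => 2 * q.1 * (pdt u q) ^ 2 - pdy u q * pdt u q)
      (((2 * p.1) • ((fderiv ℝ u p (0, 0, 1)) •
            ((ContinuousLinearMap.apply ℝ ℝ ((0 : ℝ), (0 : ℝ), (1 : ℝ))).comp H)
          + (fderiv ℝ u p (0, 0, 1)) •
            ((ContinuousLinearMap.apply ℝ ℝ ((0 : ℝ), (0 : ℝ), (1 : ℝ))).comp H))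
        + ((fderiv ℝ u p (0, 0, 1)) ^ 2) • ((2 : ℝ) • (ContinuousLinearMap.fst ℝ ℝ (ℝ × ℝ))))
       - ((fderiv ℝ u p (0, 1, 0)) •
            ((ContinuousLinearMap.apply ℝ ℝ ((0 : ℝ), (0 : ℝ), (1 : ℝ))).comp H)
          + (fderiv ℝ u p (0, 0, 1)) •
            ((ContinuousLinearMap.apply ℝ ℝ ((0 : ℝ), (1 : ℝ), (0 : ℝ))).comp H))) p := by
    have hA : HasFDerivAt (fun q : ℝ × ℝ × ℝ => 2 * q.1)
        ((2 : ℝ) • (ContinuousLinearMap.fst ℝ ℝ (ℝ × ℝ))) p := hX.const_mul (2 : ℝ)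
    have := (hA.fun_mul (hsq (0, 0, 1))).fun_sub ((hP (0, 1, 0)).fun_mul (hP (0, 0, 1)))
    simpa [pdy, pdt] using this
  -- τ₃
  have hRad : HasFDerivAt (fun q : ℝ × ℝ × ℝ => 2 * (q.1 ^ 2 + q.2.1 ^ 2))
      ((2 : ℝ) • ((p.1 • (ContinuousLinearMap.fst ℝ ℝ (ℝ × ℝ))
          + p.1 • (ContinuousLinearMap.fst ℝ ℝ (ℝ × ℝ)))
        + (p.2.1 • ((ContinuousLinearMap.fst ℝ ℝ ℝ).comp (ContinuousLinearMap.snd ℝ ℝ (ℝ × ℝ)))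
          + p.2.1 • ((ContinuousLinearMap.fst ℝ ℝ ℝ).comp
              (ContinuousLinearMap.snd ℝ ℝ (ℝ × ℝ)))))) p := by
    have hx2 : HasFDerivAt (fun q : ℝ × ℝ × ℝ => q.1 ^ 2)
        (p.1 • (ContinuousLinearMap.fst ℝ ℝ (ℝ × ℝ))
          + p.1 • (ContinuousLinearMap.fst ℝ ℝ (ℝ × ℝ))) p := by
      have := hX.fun_mul hX; simpa [pow_two] using this
    have hy2 : HasFDerivAt (fun q : ℝ × ℝ × ℝ => q.2.1 ^ 2)
        (p.2.1 • ((ContinuousLinearMap.fst ℝ ℝ ℝ).comp (ContinuousLinearMap.snd ℝ ℝ (ℝ × ℝ)))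
          + p.2.1 • ((ContinuousLinearMap.fst ℝ ℝ ℝ).comp
              (ContinuousLinearMap.snd ℝ ℝ (ℝ × ℝ)))) p := by
      have := hY.fun_mul hY; simpa [pow_two] using this
    exact (hx2.add hy2).const_mul (2 : ℝ)
  have hg3 : HasFDerivAt (fun q => (1 / 2) * (pdx u q) ^ 2 + (1 / 2) * (pdy u q) ^ 2
        - 2 * (q.1 ^ 2 + q.2.1 ^ 2) * (pdt u q) ^ 2 - F (u q))
      (((1 / 2 : ℝ) • ((fderiv ℝ u p (1, 0, 0)) •
              ((ContinuousLinearMap.apply ℝ ℝ ((1 : ℝ), (0 : ℝ), (0 : ℝ))).comp H)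
            + (fderiv ℝ u p (1, 0, 0)) •
              ((ContinuousLinearMap.apply ℝ ℝ ((1 : ℝ), (0 : ℝ), (0 : ℝ))).comp H))
        + (1 / 2 : ℝ) • ((fderiv ℝ u p (0, 1, 0)) •
              ((ContinuousLinearMap.apply ℝ ℝ ((0 : ℝ), (1 : ℝ), (0 : ℝ))).comp H)
            + (fderiv ℝ u p (0, 1, 0)) •
              ((ContinuousLinearMap.apply ℝ ℝ ((0 : ℝ), (1 : ℝ), (0 : ℝ))).comp H))
        - ((2 * (p.1 ^ 2 + p.2.1 ^ 2)) •
              ((fderiv ℝ u p (0, 0, 1)) •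
                ((ContinuousLinearMap.apply ℝ ℝ ((0 : ℝ), (0 : ℝ), (1 : ℝ))).comp H)
                + (fderiv ℝ u p (0, 0, 1)) •
                ((ContinuousLinearMap.apply ℝ ℝ ((0 : ℝ), (0 : ℝ), (1 : ℝ))).comp H))
            + ((fderiv ℝ u p (0, 0, 1)) ^ 2) •
              ((2 : ℝ) • ((p.1 • (ContinuousLinearMap.fst ℝ ℝ (ℝ × ℝ))
                  + p.1 • (ContinuousLinearMap.fst ℝ ℝ (ℝ × ℝ)))
                + (p.2.1 • ((ContinuousLinearMap.fst ℝ ℝ ℝ).comp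
                      (ContinuousLinearMap.snd ℝ ℝ (ℝ × ℝ)))
                  + p.2.1 • ((ContinuousLinearMap.fst ℝ ℝ ℝ).comp
                      (ContinuousLinearMap.snd ℝ ℝ (ℝ × ℝ)))))))
        - f (u p) • fderiv ℝ u p)) p := by
    have h1 := (hsq (1, 0, 0)).const_mul (1 / 2 : ℝ)
    have h2 := (hsq (0, 1, 0)).const_mul (1 / 2 : ℝ)
    have h3 := hRad.fun_mul (hsq (0, 0, 1))
    have := ((h1.fun_add h2).fun_sub h3).fun_sub hFu
    simpa [pdx, pdy, pdt] using this
  -- the three divergence terms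
  have d1 : pdx (fun q => -2 * q.2.1 * (pdt u q) ^ 2 - pdx u q * pdt u q) p
      = -2 * p.2.1 * (2 * fderiv ℝ u p (0, 0, 1) * H (1, 0, 0) (0, 0, 1))
        - (fderiv ℝ u p (1, 0, 0) * H (1, 0, 0) (0, 0, 1)
          + fderiv ℝ u p (0, 0, 1) * H (1, 0, 0) (1, 0, 0)) := by
    rw [pdx, hg1.fderiv]
    simp only [ContinuousLinearMap.sub_apply, ContinuousLinearMap.add_apply,
      ContinuousLinearMap.smul_apply, ContinuousLinearMap.comp_apply,
      ContinuousLinearMap.apply_apply, ContinuousLinearMap.coe_fst',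
      ContinuousLinearMap.coe_snd', smul_eq_mul]
    norm_num
    try ring
    try tauto
  have d2 : pdy (fun q => 2 * q.1 * (pdt u q) ^ 2 - pdy u q * pdt u q) p
      = 2 * p.1 * (2 * fderiv ℝ u p (0, 0, 1) * H (0, 1, 0) (0, 0, 1))
        - (fderiv ℝ u p (0, 1, 0) * H (0, 1, 0) (0, 0, 1)
          + fderiv ℝ u p (0, 0, 1) * H (0, 1, 0) (0, 1, 0)) := by
    rw [pdy, hg2.fderiv]
    simp only [ContinuousLinearMap.sub_apply, ContinuousLinearMap.add_apply,
      ContinuousLinearMap.smul_apply, ContinuousLinearMap.comp_apply,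
      ContinuousLinearMap.apply_apply, ContinuousLinearMap.coe_fst',
      ContinuousLinearMap.coe_snd', smul_eq_mul]
    norm_num
    try ring
    try tauto
  have d3 : pdt (fun q => (1 / 2) * (pdx u q) ^ 2 + (1 / 2) * (pdy u q) ^ 2
        - 2 * (q.1 ^ 2 + q.2.1 ^ 2) * (pdt u q) ^ 2 - F (u q)) p
      = fderiv ℝ u p (1, 0, 0) * H (0, 0, 1) (1, 0, 0)
        + fderiv ℝ u p (0, 1, 0) * H (0, 0, 1) (0, 1, 0)
        - 2 * (p.1 ^ 2 + p.2.1 ^ 2) * (2 * fderiv ℝ u p (0, 0, 1) * H (0, 0, 1) (0, 0, 1))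
        - f (u p) * fderiv ℝ u p (0, 0, 1) := by
    rw [pdt, hg3.fderiv]
    simp only [ContinuousLinearMap.sub_apply, ContinuousLinearMap.add_apply,
      ContinuousLinearMap.smul_apply, ContinuousLinearMap.comp_apply,
      ContinuousLinearMap.apply_apply, ContinuousLinearMap.coe_fst',
      ContinuousLinearMap.coe_snd', smul_eq_mul]
    norm_num
    try ring
    try tauto
  -- the PDE at p, in terms of H
  have key : H (1, 0, 0) (1, 0, 0) + H (0, 1, 0) (0, 1, 0)
      + 4 * (p.1 ^ 2 + p.2.1 ^ 2) * H (0, 0, 1) (0, 0, 1)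
      + 4 * p.2.1 * H (0, 0, 1) (1, 0, 0) - 4 * p.1 * H (0, 0, 1) (0, 1, 0) + f (u p) = 0 := by
    have hpde := hsol p hp
    rw [KohnLaplace] at hpde
    have e1 : pdx u = fun q => fderiv ℝ u q ((1 : ℝ), (0 : ℝ), (0 : ℝ)) := rfl
    have e2 : pdy u = fun q => fderiv ℝ u q ((0 : ℝ), (1 : ℝ), (0 : ℝ)) := rfl
    have e3 : pdt u = fun q => fderiv ℝ u q ((0 : ℝ), (0 : ℝ), (1 : ℝ)) := rfl
    have exx : pdx (pdx u) p = H (1, 0, 0) (1, 0, 0) := by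
      rw [pdx, e1, (hP (1, 0, 0)).fderiv]; simp
    have eyy : pdy (pdy u) p = H (0, 1, 0) (0, 1, 0) := by
      rw [pdy, e2, (hP (0, 1, 0)).fderiv]; simp
    have ett : pdt (pdt u) p = H (0, 0, 1) (0, 0, 1) := by
      rw [pdt, e3, (hP (0, 0, 1)).fderiv]; simp
    have etx : pdt (pdx u) p = H (0, 0, 1) (1, 0, 0) := by
      rw [pdt, e1, (hP (1, 0, 0)).fderiv]; simp
    have ety : pdt (pdy u) p = H (0, 0, 1) (0, 1, 0) := by
      rw [pdt, e2, (hP (0, 1, 0)).fderiv]; simp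
    rw [exx, eyy, ett, etx, ety] at hpde
    linarith
  rw [d1, d2, d3, hsymm (1, 0, 0) (0, 0, 1), hsymm (0, 1, 0) (0, 0, 1)]
  linear_combination (-(fderiv ℝ u p ((0 : ℝ), (0 : ℝ), (1 : ℝ)))) * key
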